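/- arXiv:1510.04424 — 2 statements merged into one kernel-verified Lean document; each statement's English description precedes it below -/
import Mathlib

section
/- Let μ > 0, λ > 0, let q ≥ 0 be an integer, and let N ≥ 1. Let f₁,…,f_N : T → ℝ be measurable functions satisfying |f_k(x,ξ)| ≤ C M^q x^q / q! on T for constants C > 0 and M > 0, and let a₁,…,a_N : [0,1] → ℝ satisfy |a_k(y)| ≤ A for all y ∈ [0,1]. Assume M ≥ N·A/μ. Then for every (x,ξ) ∈ T, setting s^F = (x − ξ)/(μ + λ), one has | ∫₀^{s^F} Σ_{k=1}^{N} a_k(x − μs) f_k(x − μs, ξ + λs) ds | ≤ C M^{q+1} x^{q+1} / (q+1)!. -/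
/- STATEMENT 9: The recursive successive-approximation bound: if |f_k| ≤ C M^q x^q/q!
on T and |a_k| ≤ A on [0,1], with M ≥ N·A/μ, then for (x,ξ) ∈ T and
s^F = (x−ξ)/(μ+λ),
|∫₀^{s^F} Σ_k a_k(x−μs) f_k(x−μs, ξ+λs) ds| ≤ C M^{q+1} x^{q+1}/(q+1)!. -/
theorem successive_approximation_recursive_bound
    (μ lam : ℝ) (hμ : 0 < μ) (hlam : 0 < lam)
    (q : ℕ) (N : ℕ) (hN : 1 ≤ N)
    (f : Fin N → ℝ → ℝ → ℝ) (a : Fin N → ℝ → ℝ)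
    (C M A : ℝ) (hC : 0 < C) (hM : 0 < M)
    (hfmeas : ∀ k, Measurable (fun p : ℝ × ℝ => f k p.1 p.2))
    (hfb : ∀ k, ∀ x ξ : ℝ, 0 ≤ ξ → ξ ≤ x → x ≤ 1 →
        |f k x ξ| ≤ C * M ^ q * x ^ q / (Nat.factorial q : ℝ))
    (hameas : ∀ k, Measurable (a k))
    (hab : ∀ k, ∀ y ∈ Set.Icc (0:ℝ) 1, |a k y| ≤ A)
    (hMA : (N : ℝ) * A / μ ≤ M)
    (x ξ : ℝ) (hξ : 0 ≤ ξ) (hxξ : ξ ≤ x) (hx : x ≤ 1) :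
    |∫ s in (0:ℝ)..((x - ξ) / (μ + lam)),
        ∑ k, a k (x - μ * s) * f k (x - μ * s) (ξ + lam * s)| ≤
      C * M ^ (q + 1) * x ^ (q + 1) / (Nat.factorial (q + 1) : ℝ) := by
  set b : ℝ := (x - ξ) / (μ + lam) with hbdef
  have hμl : 0 < μ + lam := by linarith
  have hb0 : 0 ≤ b := div_nonneg (by linarith) hμl.le
  have hA0 : 0 ≤ A := le_trans (abs_nonneg _) (hab ⟨0, hN⟩ 0 ⟨le_refl 0, zero_le_one⟩)
  have hq0 : (0:ℝ) < (Nat.factorial q : ℝ) := by positivity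
  set K : ℝ := (N : ℝ) * A * C * M ^ q / (Nat.factorial q : ℝ) with hKdef
  have hK0 : 0 ≤ K := by positivity
  set F : ℝ → ℝ := fun s => ∑ k, a k (x - μ * s) * f k (x - μ * s) (ξ + lam * s) with hFdef
  -- pointwise bound on [0, b]
  have key : ∀ s ∈ Set.Icc (0:ℝ) b, |F s| ≤ K * (x - μ * s) ^ q := by
    intro s hs
    obtain ⟨hs0, hsb⟩ := hs
    set u := x - μ * s with hu
    set v := ξ + lam * s with hv
    have hv0 : 0 ≤ v := by have := mul_nonneg hlam.le hs0; simp [hv]; linarith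
    have hvu : v ≤ u := by
      have : (μ + lam) * s ≤ x - ξ := by
        have := (le_div_iff₀ hμl).mp hsb
        linarith [mul_le_mul_of_nonneg_left hsb hμl.le, (div_le_iff₀ hμl).mp (le_refl b)]
      simp only [hu, hv]; nlinarith
    have hu1 : u ≤ 1 := by
      have := mul_nonneg hμ.le hs0
      simp only [hu]; linarith
    have hu0 : 0 ≤ u := le_trans hv0 hvu
    have hterm : ∀ k : Fin N, |a k u * f k u v| ≤ A * (C * M ^ q * u ^ q / (Nat.factorial q : ℝ)) := by
      intro k
      rw [abs_mul]
      exact mul_le_mul (hab k u ⟨hu0, hu1⟩) (hfb k u v hv0 hvu hu1) (abs_nonneg _)  hA0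
    calc |F s| ≤ ∑ k : Fin N, |a k u * f k u v| := by
            apply Finset.abs_sum_le_sum_abs
      _ ≤ ∑ _k : Fin N, A * (C * M ^ q * u ^ q / (Nat.factorial q : ℝ)) :=
            Finset.sum_le_sum (fun k _ => hterm k)
      _ = (N : ℝ) * (A * (C * M ^ q * u ^ q / (Nat.factorial q : ℝ))) := by
            simp [Finset.sum_const, Finset.card_univ, mul_comm]
      _ = K * u ^ q := by rw [hKdef]; ring
  -- measurability
  have hFm : Measurable F := by
    apply Finset.measurable_sum
    intro k _
    have h1 : Measurable (fun s : ℝ => x - μ * s) :=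
      measurable_const.sub (measurable_id.const_mul μ)
    have h1' : Measurable (fun s : ℝ => ξ + lam * s) :=
      measurable_const.add (measurable_id.const_mul lam)
    have h2 : Measurable (fun s : ℝ => ((x - μ * s, ξ + lam * s) : ℝ × ℝ)) :=
      h1.prodMk h1'
    exact ((hameas k).comp h1).mul ((hfmeas k).comp h2)
  -- integrability
  have hlincont : Continuous (fun s : ℝ => x - μ * s) :=
    continuous_const.sub (continuous_const.mul continuous_id)
  have hgcont : Continuous (fun s : ℝ => K * (x - μ * s) ^ q) :=
    continuous_const.mul (hlincont.pow q)
  have hg_int : IntervalIntegrable (fun s : ℝ => K * (x - μ * s) ^ q)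
      MeasureTheory.volume 0 b := hgcont.intervalIntegrable 0 b
  have hF_int : IntervalIntegrable F MeasureTheory.volume 0 b := by
    apply hg_int.mono_fun hFm.aestronglyMeasurable.restrict
    rw [Set.uIoc_of_le hb0]
    filter_upwards [MeasureTheory.ae_restrict_mem measurableSet_Ioc] with s hs
    have hs' : s ∈ Set.Icc (0:ℝ) b := ⟨hs.1.le, hs.2⟩
    have h1 := key s hs'
    have hu0 : (0:ℝ) ≤ x - μ * s := by
      have hv0 : 0 ≤ ξ + lam * s := by nlinarith [hs.1.le]
      nlinarith [key s hs', abs_nonneg (F s), (le_div_iff₀ hμl).mp hs.2]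
    rw [Real.norm_eq_abs, Real.norm_eq_abs, abs_of_nonneg (by positivity : (0:ℝ) ≤ K * (x - μ * s) ^ q)]
    exact h1
  -- compute the comparison integral
  have hderiv : ∀ s ∈ Set.uIcc (0:ℝ) b,
      HasDerivAt (fun s : ℝ => -((x - μ * s) ^ (q + 1)) / (μ * (q + 1)))
        ((x - μ * s) ^ q) s := by
    intro s _
    have h1 : HasDerivAt (fun s : ℝ => x - μ * s) (-μ) s := by
      simpa using ((hasDerivAt_id s).const_mul μ).const_sub x
    have h2 := (h1.pow (q + 1)).div_const (μ * (q + 1))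
    have h3 := h2.neg
    have hne : μ * ((q:ℝ) + 1) ≠ 0 := by positivity
    convert h3 using 2 with t
    · rfl
    · rfl
    · rw [neg_div]; rfl
    · field_simp
      simp only [add_tsub_cancel_left, add_tsub_cancel_right, Nat.cast_add, Nat.cast_one]
      ring
  have hpow_int : IntervalIntegrable (fun s : ℝ => (x - μ * s) ^ q)
      MeasureTheory.volume 0 b := (hlincont.pow q).intervalIntegrable 0 b
  have hint_eq : (∫ s in (0:ℝ)..b, (x - μ * s) ^ q) =
      (x ^ (q + 1) - (x - μ * b) ^ (q + 1)) / (μ * (q + 1)) := by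
    rw [intervalIntegral.integral_eq_sub_of_hasDerivAt hderiv hpow_int]
    have hne : μ * ((q:ℝ) + 1) ≠ 0 := by positivity
    field_simp
    ring
  have hc0 : 0 ≤ x - μ * b := by
    have : μ * b ≤ x - ξ := by
      rw [hbdef]
      have : (x - ξ) / (μ + lam) ≤ (x - ξ) / μ := by
        apply div_le_div_of_nonneg_left (by linarith) hμ (by linarith)
      calc μ * ((x - ξ) / (μ + lam)) ≤ μ * ((x - ξ) / μ) := by
            exact mul_le_mul_of_nonneg_left this hμ.le
        _ = x - ξ := by field_simp
    linarith
  -- main chain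
  have step1 : |∫ s in (0:ℝ)..b, F s| ≤ ∫ s in (0:ℝ)..b, |F s| := by
    simpa [Real.norm_eq_abs] using intervalIntegral.norm_integral_le_integral_norm (f := F) hb0
  have step2 : (∫ s in (0:ℝ)..b, |F s|) ≤ ∫ s in (0:ℝ)..b, K * (x - μ * s) ^ q := by
    apply intervalIntegral.integral_mono_on hb0 hF_int.abs hg_int
    exact key
  have hx0 : 0 ≤ x := le_trans hξ hxξ
  have step3 : (∫ s in (0:ℝ)..b, K * (x - μ * s) ^ q) ≤ K * x ^ (q + 1) / (μ * (q + 1)) := by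
    rw [intervalIntegral.integral_const_mul, hint_eq]
    have h1 : (x ^ (q + 1) - (x - μ * b) ^ (q + 1)) / (μ * (q + 1)) ≤
        x ^ (q + 1) / (μ * (q + 1)) := by
      apply div_le_div_of_nonneg_right ?_ (by positivity)
      nlinarith [pow_nonneg hc0 (q + 1)]
    calc K * ((x ^ (q + 1) - (x - μ * b) ^ (q + 1)) / (μ * (q + 1)))
        ≤ K * (x ^ (q + 1) / (μ * (q + 1))) := mul_le_mul_of_nonneg_left h1 hK0
      _ = K * x ^ (q + 1) / (μ * (q + 1)) := by ring
  have hfact : (Nat.factorial (q + 1) : ℝ) = ((q:ℝ) + 1) * (Nat.factorial q : ℝ) := by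
    push_cast [Nat.factorial_succ]; ring
  have step4 : K * x ^ (q + 1) / (μ * (q + 1)) ≤
      C * M ^ (q + 1) * x ^ (q + 1) / (Nat.factorial (q + 1) : ℝ) := by
    have hEq : K * x ^ (q + 1) / (μ * (q + 1)) =
        ((N : ℝ) * A / μ) * (C * M ^ q * x ^ (q + 1) / (((q:ℝ) + 1) * (Nat.factorial q : ℝ))) := by
      rw [hKdef]; field_simp
    have hpos : 0 ≤ C * M ^ q * x ^ (q + 1) / (((q:ℝ) + 1) * (Nat.factorial q : ℝ)) := by
      positivity
    rw [hEq]
    calc ((N : ℝ) * A / μ) * (C * M ^ q * x ^ (q + 1) / (((q:ℝ) + 1) * (Nat.factorial q : ℝ)))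
        ≤ M * (C * M ^ q * x ^ (q + 1) / (((q:ℝ) + 1) * (Nat.factorial q : ℝ))) :=
          mul_le_mul_of_nonneg_right hMA hpos
      _ = C * M ^ (q + 1) * x ^ (q + 1) / (Nat.factorial (q + 1) : ℝ) := by
          rw [hfact]; ring
  exact le_trans (le_trans step1 (le_trans step2 step3)) step4
end

section
/- Let K : T → ℝ^{m×n} and L : T → ℝ^{m×m} be bounded measurable matrix functions and let Σ⁺⁻ ∈ ℝ^{n×m}. Then there exists a unique bounded measurable C⁻ : T → ℝ^{n×m} satisfying the Volterra integral equation of the second kind C⁻(x,ξ) = Σ⁺⁻L(x,ξ) + ∫_ξ^x C⁻(x,s)L(s,ξ) ds for all (x,ξ) ∈ T; moreover, the function C⁺ : T → ℝ^{n×n} defined by C⁺(x,ξ) = Σ⁺⁻K(x,ξ) + ∫_ξ^x C⁻(x,s)K(s,ξ) ds is then bounded as well. -/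
open MeasureTheory Set Filter

/-- The triangle. -/
def Tri : Set (ℝ × ℝ) := {p | 0 ≤ p.2 ∧ p.2 ≤ p.1 ∧ p.1 ≤ 1}

lemma Tri_measurable : MeasurableSet Tri := by
  exact ((measurableSet_le measurable_const measurable_snd).inter
    ((measurableSet_le measurable_snd measurable_fst).inter
      (measurableSet_le measurable_fst measurable_const)))

lemma meas_setIntegral {f : (ℝ × ℝ) → ℝ → ℝ} (hf : Measurable (Function.uncurry f))
    {lo hi : ℝ × ℝ → ℝ} (hlo : Measurable lo) (hhi : Measurable hi) :
    Measurable fun p : ℝ × ℝ => ∫ s, (Set.Ioc (lo p) (hi p)).indicator (f p) s := by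
  have hA : MeasurableSet {q : (ℝ × ℝ) × ℝ | lo q.1 < q.2 ∧ q.2 ≤ hi q.1} :=
    (measurableSet_lt (hlo.comp measurable_fst) measurable_snd).inter
      (measurableSet_le measurable_snd (hhi.comp measurable_fst))
  have hind : Measurable fun q : (ℝ × ℝ) × ℝ =>
      ({q : (ℝ × ℝ) × ℝ | lo q.1 < q.2 ∧ q.2 ≤ hi q.1}).indicator (Function.uncurry f) q :=
    hf.indicator hA
  have hsm := (hind.stronglyMeasurable).integral_prod_right' (ν := (volume : Measure ℝ))
  have : (fun p : ℝ × ℝ => ∫ s, (Set.Ioc (lo p) (hi p)).indicator (f p) s) =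
      fun p : ℝ × ℝ => ∫ s, ({q : (ℝ × ℝ) × ℝ | lo q.1 < q.2 ∧ q.2 ≤ hi q.1}).indicator
        (Function.uncurry f) (p, s) := by
    funext p
    refine congrArg _ (funext fun s => ?_)
    by_cases h : s ∈ Set.Ioc (lo p) (hi p)
    · rw [Set.indicator_of_mem h, Set.indicator_of_mem (by exact h)]; rfl
    · rw [Set.indicator_of_notMem h, Set.indicator_of_notMem (by exact h)]
  rw [this]
  exact hsm.measurable

lemma meas_paramIntegral {f : (ℝ × ℝ) → ℝ → ℝ}
    (hf : Measurable (Function.uncurry f)) :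
    Measurable fun p : ℝ × ℝ => ∫ s in p.2..p.1, f p s := by
  have h1 := meas_setIntegral hf measurable_snd measurable_fst
  have h2 := meas_setIntegral hf measurable_fst measurable_snd
  have : (fun p : ℝ × ℝ => ∫ s in p.2..p.1, f p s) = fun p =>
      (∫ s, (Set.Ioc p.2 p.1).indicator (f p) s) - ∫ s, (Set.Ioc p.1 p.2).indicator (f p) s := by
    funext p
    rw [intervalIntegral, integral_indicator measurableSet_Ioc,
      integral_indicator measurableSet_Ioc]
  rw [this]
  exact h1.sub h2

noncomputable def vIter (n m : ℕ) (Spm : Fin n → Fin m → ℝ)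
    (L : ℝ → ℝ → Fin m → Fin m → ℝ) : ℕ → ℝ × ℝ → Fin n → Fin m → ℝ
  | 0 => fun p i j => Tri.indicator (fun q => ∑ k, Spm i k * L q.1 q.2 k j) p
  | (N+1) => fun p i j => Tri.indicator
      (fun q => ∫ s in q.2..q.1, ∑ k, vIter n m Spm L N (q.1, s) i k * L s q.2 k j) p

lemma vIter_meas (n m : ℕ) (Spm : Fin n → Fin m → ℝ) (L : ℝ → ℝ → Fin m → Fin m → ℝ)
    (hLmeas : ∀ i j, Measurable (fun p : ℝ × ℝ => L p.1 p.2 i j)) :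
    ∀ N i j, Measurable fun p : ℝ × ℝ => vIter n m Spm L N p i j := by
  intro N
  induction N with
  | zero =>
    intro i j
    exact Measurable.indicator
      (by exact Finset.measurable_sum _ fun k _ => (measurable_const.mul (hLmeas k j)))
      Tri_measurable
  | succ N ih =>
    intro i j
    apply Measurable.indicator _ Tri_measurable
    apply meas_paramIntegral (f := fun p s => ∑ k, vIter n m Spm L N (p.1, s) i k * L s p.2 k j)
    apply Finset.measurable_sum
    intro k _
    have h1 : Measurable fun q : (ℝ × ℝ) × ℝ => vIter n m Spm L N (q.1.1, q.2) i k :=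
      (ih i k).comp ((measurable_fst.comp measurable_fst).prodMk measurable_snd)
    have h2 : Measurable fun q : (ℝ × ℝ) × ℝ => L q.2 q.1.2 k j :=
      (hLmeas k j).comp (measurable_snd.prodMk (measurable_snd.comp measurable_fst))
    exact h1.mul h2

lemma vIter_bound (n m : ℕ) (Spm : Fin n → Fin m → ℝ) (L : ℝ → ℝ → Fin m → Fin m → ℝ)
    {B S : ℝ} (hB : 0 ≤ B) (hS : 0 ≤ S)
    (hL : ∀ p ∈ Tri, ∀ i j, |L (p : ℝ × ℝ).1 p.2 i j| ≤ B)
    (hSpm : ∀ i, ∑ k, |Spm i k| ≤ S) :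
    ∀ N, ∀ p ∈ Tri, ∀ i j, |vIter n m Spm L N p i j| ≤
      S * B * ((m : ℝ) * B) ^ N * ((p : ℝ × ℝ).1 - p.2) ^ N / N.factorial := by
  intro N
  induction N with
  | zero =>
    rintro ⟨x, ξ⟩ hp i j
    simp only [vIter, Set.indicator_of_mem hp, pow_zero, Nat.factorial_zero, Nat.cast_one,
      mul_one, div_one]
    calc |∑ k, Spm i k * L x ξ k j| ≤ ∑ k, |Spm i k * L x ξ k j| := Finset.abs_sum_le_sum_abs _ _
      _ ≤ ∑ k, |Spm i k| * B := by
          refine Finset.sum_le_sum fun k _ => ?_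
          rw [abs_mul]
          exact mul_le_mul_of_nonneg_left (hL _ hp k j) (abs_nonneg _)
      _ = (∑ k, |Spm i k|) * B := by rw [Finset.sum_mul]
      _ ≤ S * B := mul_le_mul_of_nonneg_right (hSpm i) hB
  | succ N ih =>
    rintro ⟨x, ξ⟩ hp i j
    obtain ⟨hξ0, hξx, hx1⟩ := hp
    simp only at hξ0 hξx hx1
    have hp : ((x, ξ) : ℝ × ℝ) ∈ Tri := ⟨hξ0, hξx, hx1⟩
    simp only [vIter, Set.indicator_of_mem hp]
    set C : ℝ := S * B * ((m : ℝ) * B) ^ (N + 1) / N.factorial with hC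
    have hCnn : 0 ≤ C := by positivity
    have hbd : ∀ s ∈ Set.Ioc ξ x,
        |∑ k, vIter n m Spm L N (x, s) i k * L s ξ k j| ≤ C * (x - s) ^ N := by
      intro s hs
      have hxs : ((x, s) : ℝ × ℝ) ∈ Tri := ⟨le_trans hξ0 hs.1.le, hs.2, hx1⟩
      have hsξ : ((s, ξ) : ℝ × ℝ) ∈ Tri := ⟨hξ0, hs.1.le, le_trans hs.2 hx1⟩
      calc |∑ k, vIter n m Spm L N (x, s) i k * L s ξ k j|
          ≤ ∑ k, |vIter n m Spm L N (x, s) i k * L s ξ k j| := Finset.abs_sum_le_sum_abs _ _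
        _ ≤ ∑ _k : Fin m, (S * B * ((m : ℝ) * B) ^ N * (x - s) ^ N / N.factorial) * B := by
            refine Finset.sum_le_sum fun k _ => ?_
            rw [abs_mul]
            have hxsnn : (0:ℝ) ≤ x - s := sub_nonneg.2 hs.2
            refine mul_le_mul (ih _ hxs i k) (hL _ hsξ k j) (abs_nonneg _)
              (div_nonneg (mul_nonneg (mul_nonneg (mul_nonneg hS hB)
                (pow_nonneg (by positivity) N)) (pow_nonneg hxsnn N)) (Nat.cast_nonneg _))
        _ = C * (x - s) ^ N := by
            rw [Finset.sum_const, Finset.card_univ, Fintype.card_fin, nsmul_eq_mul, hC]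
            ring
    have hii : IntervalIntegrable (fun s => C * (x - s) ^ N) volume ξ x :=
      (Continuous.intervalIntegrable (by continuity)) _ _
    have hnorm : ‖∫ s in ξ..x, ∑ k, vIter n m Spm L N (x, s) i k * L s ξ k j‖ ≤
        |∫ s in ξ..x, C * (x - s) ^ N| := by
      refine intervalIntegral.norm_integral_le_abs_of_norm_le ?_ hii
      refine (ae_restrict_iff' measurableSet_uIoc).2 (Filter.Eventually.of_forall fun s hs => ?_)
      rw [Set.uIoc_of_le hξx] at hs
      simpa [Real.norm_eq_abs] using hbd s hs
    have hval : (∫ s in ξ..x, C * (x - s) ^ N) = C * (x - ξ) ^ (N + 1) / (N + 1) := by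
      rw [intervalIntegral.integral_const_mul]
      have := intervalIntegral.integral_comp_sub_left (a := ξ) (b := x) (fun t => t ^ N) x
      rw [this, sub_self, integral_pow]
      push_cast
      ring
    rw [Real.norm_eq_abs] at hnorm
    refine le_trans hnorm ?_
    have hxξnn : (0:ℝ) ≤ x - ξ := sub_nonneg.2 hξx
    rw [hval, abs_of_nonneg (div_nonneg (mul_nonneg hCnn (pow_nonneg hxξnn _)) (by positivity))]
    rw [hC]
    have hfact : ((N + 1).factorial : ℝ) = ((N : ℝ) + 1) * N.factorial := by
      rw [Nat.factorial_succ]; push_cast; ring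
    rw [hfact]
    have hNf : (0 : ℝ) < N.factorial := by positivity
    have hN1 : (0 : ℝ) < (N : ℝ) + 1 := by positivity
    field_simp
    ring_nf
    exact le_refl _

lemma vIter_off (n m : ℕ) (Spm : Fin n → Fin m → ℝ) (L : ℝ → ℝ → Fin m → Fin m → ℝ)
    (N : ℕ) {p : ℝ × ℝ} (hp : p ∉ Tri) (i : Fin n) (j : Fin m) :
    vIter n m Spm L N p i j = 0 := by
  cases N <;> simp [vIter, Set.indicator_of_notMem hp]

lemma vIter_summable (n m : ℕ) (Spm : Fin n → Fin m → ℝ) (L : ℝ → ℝ → Fin m → Fin m → ℝ)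
    {B S : ℝ} (hB : 0 ≤ B) (hS : 0 ≤ S)
    (hL : ∀ p ∈ Tri, ∀ i j, |L (p : ℝ × ℝ).1 p.2 i j| ≤ B)
    (hSpm : ∀ i, ∑ k, |Spm i k| ≤ S) :
    ∀ (p : ℝ × ℝ) (i : Fin n) (j : Fin m),
      Summable fun N => vIter n m Spm L N p i j := by
  intro p i j
  by_cases hp : p ∈ Tri
  · refine Summable.of_norm_bounded (g := fun N => S * B * (((m : ℝ) * B) ^ N / N.factorial)) ?_ ?_
    · exact (Real.summable_pow_div_factorial ((m : ℝ) * B)).mul_left (S * B)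
    · intro N
      rw [Real.norm_eq_abs]
      refine le_trans (vIter_bound n m Spm L hB hS hL hSpm N p hp i j) ?_
      have h1 : (p.1 - p.2) ^ N ≤ 1 := by
        refine pow_le_one₀ (sub_nonneg.2 hp.2.1) ?_
        have := hp.1; have := hp.2.2; linarith
      have h2 : (0:ℝ) ≤ ((m : ℝ) * B) ^ N := by positivity
      have h3 : (0:ℝ) < (N.factorial : ℝ) := by positivity
      rw [div_le_iff₀ h3]
      calc S * B * ((m : ℝ) * B) ^ N * (p.1 - p.2) ^ N ≤ S * B * ((m : ℝ) * B) ^ N * 1 := by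
            refine mul_le_mul_of_nonneg_left h1 (by positivity)
        _ = S * B * (((m : ℝ) * B) ^ N / N.factorial) * N.factorial := by field_simp
  · have : (fun N => vIter n m Spm L N p i j) = fun _ => (0:ℝ) :=
      funext fun N => vIter_off n m Spm L N hp i j
    rw [this]
    exact summable_zero

noncomputable def CmFun (n m : ℕ) (Spm : Fin n → Fin m → ℝ)
    (L : ℝ → ℝ → Fin m → Fin m → ℝ) (p : ℝ × ℝ) (i : Fin n) (j : Fin m) : ℝ :=
  ∑' N, vIter n m Spm L N p i j

lemma CmFun_meas (n m : ℕ) (Spm : Fin n → Fin m → ℝ) (L : ℝ → ℝ → Fin m → Fin m → ℝ)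
    (hLmeas : ∀ i j, Measurable (fun p : ℝ × ℝ => L p.1 p.2 i j))
    {B S : ℝ} (hB : 0 ≤ B) (hS : 0 ≤ S)
    (hL : ∀ p ∈ Tri, ∀ i j, |L (p : ℝ × ℝ).1 p.2 i j| ≤ B)
    (hSpm : ∀ i, ∑ k, |Spm i k| ≤ S) (i : Fin n) (j : Fin m) :
    Measurable fun p : ℝ × ℝ => CmFun n m Spm L p i j := by
  refine measurable_of_tendsto_metrizable
    (f := fun k p => ∑ N ∈ Finset.range k, vIter n m Spm L N p i j)
    (fun k => Finset.measurable_sum _ fun N _ => vIter_meas n m Spm L hLmeas N i j) ?_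
  rw [tendsto_pi_nhds]
  intro p
  exact (vIter_summable n m Spm L hB hS hL hSpm p i j).hasSum.tendsto_sum_nat

lemma CmFun_bound (n m : ℕ) (Spm : Fin n → Fin m → ℝ) (L : ℝ → ℝ → Fin m → Fin m → ℝ)
    {B S : ℝ} (hB : 0 ≤ B) (hS : 0 ≤ S)
    (hL : ∀ p ∈ Tri, ∀ i j, |L (p : ℝ × ℝ).1 p.2 i j| ≤ B)
    (hSpm : ∀ i, ∑ k, |Spm i k| ≤ S) :
    ∀ p ∈ Tri, ∀ (i : Fin n) (j : Fin m),
      |CmFun n m Spm L p i j| ≤ ∑' N : ℕ, S * B * (((m : ℝ) * B) ^ N / N.factorial) := by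
  intro p hp i j
  have hg : Summable fun N : ℕ => S * B * (((m : ℝ) * B) ^ N / N.factorial) :=
    (Real.summable_pow_div_factorial ((m : ℝ) * B)).mul_left (S * B)
  have hbd : ∀ N : ℕ, |vIter n m Spm L N p i j| ≤ S * B * (((m : ℝ) * B) ^ N / N.factorial) := by
    intro N
    refine le_trans (vIter_bound n m Spm L hB hS hL hSpm N p hp i j) ?_
    have h1 : (p.1 - p.2) ^ N ≤ 1 := by
      refine pow_le_one₀ (sub_nonneg.2 hp.2.1) ?_
      have := hp.1; have := hp.2.2; linarith
    have h3 : (0:ℝ) < (N.factorial : ℝ) := by positivity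
    rw [div_le_iff₀ h3]
    calc S * B * ((m : ℝ) * B) ^ N * (p.1 - p.2) ^ N ≤ S * B * ((m : ℝ) * B) ^ N * 1 :=
          mul_le_mul_of_nonneg_left h1 (by positivity)
      _ = S * B * (((m : ℝ) * B) ^ N / N.factorial) * N.factorial := by field_simp
  have habs : Summable fun N => |vIter n m Spm L N p i j| :=
    Summable.of_nonneg_of_le (fun _ => abs_nonneg _) hbd hg
  have habs' : Summable fun N => ‖vIter n m Spm L N p i j‖ := by
    simpa [Real.norm_eq_abs] using habs
  have hkey : ‖∑' N, vIter n m Spm L N p i j‖ ≤ ∑' N, ‖vIter n m Spm L N p i j‖ :=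
    norm_tsum_le_tsum_norm habs'
  simp only [Real.norm_eq_abs] at hkey
  calc |CmFun n m Spm L p i j| ≤ ∑' N, |vIter n m Spm L N p i j| := hkey
    _ ≤ ∑' N : ℕ, S * B * (((m : ℝ) * B) ^ N / N.factorial) := Summable.tsum_le_tsum hbd habs hg

lemma CmFun_eq (n m : ℕ) (Spm : Fin n → Fin m → ℝ) (L : ℝ → ℝ → Fin m → Fin m → ℝ)
    (hLmeas : ∀ i j, Measurable (fun p : ℝ × ℝ => L p.1 p.2 i j))
    {B S : ℝ} (hB : 0 ≤ B) (hS : 0 ≤ S)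
    (hL : ∀ p ∈ Tri, ∀ i j, |L (p : ℝ × ℝ).1 p.2 i j| ≤ B)
    (hSpm : ∀ i, ∑ k, |Spm i k| ≤ S) :
    ∀ x ξ : ℝ, 0 ≤ ξ → ξ ≤ x → x ≤ 1 → ∀ (i : Fin n) (j : Fin m),
      CmFun n m Spm L (x, ξ) i j = (∑ k, Spm i k * L x ξ k j) +
        ∫ s in ξ..x, ∑ k, CmFun n m Spm L (x, s) i k * L s ξ k j := by
  intro x ξ hξ0 hξx hx1 i j
  have hp : ((x, ξ) : ℝ × ℝ) ∈ Tri := ⟨hξ0, hξx, hx1⟩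
  have hsum := vIter_summable n m Spm L hB hS hL hSpm (x, ξ) i j
  have h0 : vIter n m Spm L 0 (x, ξ) i j = ∑ k, Spm i k * L x ξ k j := by
    simp [vIter, Set.indicator_of_mem hp]
  have hstep : ∀ N, vIter n m Spm L (N + 1) (x, ξ) i j =
      ∫ s in ξ..x, ∑ k, vIter n m Spm L N (x, s) i k * L s ξ k j := by
    intro N
    simp [vIter, Set.indicator_of_mem hp]
  -- HasSum of integrals
  set μ : MeasureTheory.Measure ℝ := volume.restrict (Set.Ioc ξ x) with hμ
  have hmem : ∀ s ∈ Set.Ioc ξ x, ((x, s) : ℝ × ℝ) ∈ Tri ∧ ((s, ξ) : ℝ × ℝ) ∈ Tri :=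
    fun s hs => ⟨⟨le_trans hξ0 hs.1.le, hs.2, hx1⟩, ⟨hξ0, hs.1.le, le_trans hs.2 hx1⟩⟩
  have hFmeas : ∀ N, Measurable fun s => ∑ k, vIter n m Spm L N (x, s) i k * L s ξ k j := by
    intro N
    refine Finset.measurable_sum _ fun k _ => Measurable.mul ?_ ?_
    · exact (vIter_meas n m Spm L hLmeas N i k).comp (measurable_const.prodMk measurable_id)
    · exact (hLmeas k j).comp (measurable_id.prodMk measurable_const)
  have hbd : ∀ N, ∀ s ∈ Set.Ioc ξ x,
      ‖∑ k, vIter n m Spm L N (x, s) i k * L s ξ k j‖ ≤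
        (m : ℝ) * (S * B * (((m : ℝ) * B) ^ N / N.factorial)) * B := by
    intro N s hs
    obtain ⟨hxs, hsξ⟩ := hmem s hs
    rw [Real.norm_eq_abs]
    have hvb : ∀ k, |vIter n m Spm L N (x, s) i k| ≤
        S * B * (((m : ℝ) * B) ^ N / N.factorial) := by
      intro k
      refine le_trans (vIter_bound n m Spm L hB hS hL hSpm N (x, s) hxs i k) ?_
      have h1 : (x - s) ^ N ≤ 1 := by
        refine pow_le_one₀ (sub_nonneg.2 hs.2) ?_
        have := hs.1; linarith
      have h3 : (0:ℝ) < (N.factorial : ℝ) := by positivity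
      rw [div_le_iff₀ h3]
      calc S * B * ((m : ℝ) * B) ^ N * (x - s) ^ N ≤ S * B * ((m : ℝ) * B) ^ N * 1 :=
            mul_le_mul_of_nonneg_left h1 (by positivity)
        _ = S * B * (((m : ℝ) * B) ^ N / N.factorial) * N.factorial := by field_simp
    calc |∑ k, vIter n m Spm L N (x, s) i k * L s ξ k j|
        ≤ ∑ k, |vIter n m Spm L N (x, s) i k * L s ξ k j| := Finset.abs_sum_le_sum_abs _ _
      _ ≤ ∑ _k : Fin m, S * B * (((m : ℝ) * B) ^ N / N.factorial) * B := by
          refine Finset.sum_le_sum fun k _ => ?_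
          rw [abs_mul]
          exact mul_le_mul (hvb k) (hL _ hsξ k j) (abs_nonneg _) (by positivity)
      _ = (m : ℝ) * (S * B * (((m : ℝ) * B) ^ N / N.factorial)) * B := by
          rw [Finset.sum_const, Finset.card_univ, Fintype.card_fin, nsmul_eq_mul]; ring
  have hgsummable : Summable fun N : ℕ =>
      (m : ℝ) * (S * B * (((m : ℝ) * B) ^ N / N.factorial)) * B := by
    have := (Real.summable_pow_div_factorial ((m : ℝ) * B)).mul_left ((m : ℝ) * (S * B))
    refine (this.mul_right B).congr fun N => ?_
    ring
  have hHasSum : HasSum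
      (fun N => ∫ s, (∑ k, vIter n m Spm L N (x, s) i k * L s ξ k j) ∂μ)
      (∫ s, (∑ k, CmFun n m Spm L (x, s) i k * L s ξ k j) ∂μ) := by
    refine MeasureTheory.hasSum_integral_of_dominated_convergence
      (bound := fun N _ => (m : ℝ) * (S * B * (((m : ℝ) * B) ^ N / N.factorial)) * B)
      (fun N => (hFmeas N).aestronglyMeasurable) ?_ ?_ ?_ ?_
    · intro N
      rw [hμ]
      exact (MeasureTheory.ae_restrict_iff' measurableSet_Ioc).2
        (Filter.Eventually.of_forall fun s hs => hbd N s hs)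
    · exact Filter.Eventually.of_forall fun _ => hgsummable
    · rw [hμ]
      refine MeasureTheory.integrable_const _
    · rw [hμ]
      refine (MeasureTheory.ae_restrict_iff' measurableSet_Ioc).2
        (Filter.Eventually.of_forall fun s hs => ?_)
      refine hasSum_sum fun k _ => ?_
      exact ((vIter_summable n m Spm L hB hS hL hSpm (x, s) i k).hasSum.mul_right _)
  have hieq : ∀ g : ℝ → ℝ, (∫ s in ξ..x, g s) = ∫ s, g s ∂μ := by
    intro g
    rw [hμ, intervalIntegral.integral_of_le hξx]
  calc CmFun n m Spm L (x, ξ) i j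
      = vIter n m Spm L 0 (x, ξ) i j + ∑' N, vIter n m Spm L (N + 1) (x, ξ) i j :=
        Summable.tsum_eq_zero_add hsum
    _ = (∑ k, Spm i k * L x ξ k j) +
        ∫ s in ξ..x, ∑ k, CmFun n m Spm L (x, s) i k * L s ξ k j := by
        rw [h0, hieq]
        congr 1
        rw [← hHasSum.tsum_eq]
        refine tsum_congr fun N => ?_
        rw [hstep N, hieq]

lemma volterra_unique_aux (n m : ℕ) (L : ℝ → ℝ → Fin m → Fin m → ℝ)
    {B D : ℝ} (hB : 0 ≤ B) (hD : 0 ≤ D)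
    (hL : ∀ p ∈ Tri, ∀ i j, |L (p : ℝ × ℝ).1 p.2 i j| ≤ B)
    (d : ℝ → ℝ → Fin n → Fin m → ℝ)
    (hdbd : ∀ x ξ : ℝ, 0 ≤ ξ → ξ ≤ x → x ≤ 1 → ∀ i j, |d x ξ i j| ≤ D)
    (heq : ∀ x ξ : ℝ, 0 ≤ ξ → ξ ≤ x → x ≤ 1 → ∀ i j,
      d x ξ i j = ∫ s in ξ..x, ∑ k, d x s i k * L s ξ k j) :
    ∀ x ξ : ℝ, 0 ≤ ξ → ξ ≤ x → x ≤ 1 → ∀ i j, d x ξ i j = 0 := by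
  have claim : ∀ N : ℕ, ∀ x ξ : ℝ, 0 ≤ ξ → ξ ≤ x → x ≤ 1 → ∀ i j,
      |d x ξ i j| ≤ D * ((m : ℝ) * B) ^ N * (x - ξ) ^ N / N.factorial := by
    intro N
    induction N with
    | zero => intro x ξ hξ0 hξx hx1 i j
              simpa using hdbd x ξ hξ0 hξx hx1 i j
    | succ N ih =>
      intro x ξ hξ0 hξx hx1 i j
      set C : ℝ := D * ((m : ℝ) * B) ^ (N + 1) / N.factorial with hC
      have hCnn : 0 ≤ C := by positivity
      have hbd : ∀ s ∈ Set.Ioc ξ x,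
          |∑ k, d x s i k * L s ξ k j| ≤ C * (x - s) ^ N := by
        intro s hs
        have hsξ : ((s, ξ) : ℝ × ℝ) ∈ Tri := ⟨hξ0, hs.1.le, le_trans hs.2 hx1⟩
        have hxsnn : (0:ℝ) ≤ x - s := sub_nonneg.2 hs.2
        calc |∑ k, d x s i k * L s ξ k j| ≤ ∑ k, |d x s i k * L s ξ k j| :=
              Finset.abs_sum_le_sum_abs _ _
          _ ≤ ∑ _k : Fin m, (D * ((m : ℝ) * B) ^ N * (x - s) ^ N / N.factorial) * B := by
              refine Finset.sum_le_sum fun k _ => ?_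
              rw [abs_mul]
              refine mul_le_mul (ih x s (le_trans hξ0 hs.1.le) hs.2 hx1 i k) (hL _ hsξ k j)
                (abs_nonneg _) (div_nonneg (mul_nonneg (mul_nonneg hD (by positivity))
                  (pow_nonneg hxsnn N)) (Nat.cast_nonneg _))
          _ = C * (x - s) ^ N := by
              rw [Finset.sum_const, Finset.card_univ, Fintype.card_fin, nsmul_eq_mul, hC]
              ring
      have hii : IntervalIntegrable (fun s => C * (x - s) ^ N) volume ξ x :=
        (Continuous.intervalIntegrable (by continuity)) _ _
      have hnorm : ‖∫ s in ξ..x, ∑ k, d x s i k * L s ξ k j‖ ≤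
          |∫ s in ξ..x, C * (x - s) ^ N| := by
        refine intervalIntegral.norm_integral_le_abs_of_norm_le ?_ hii
        refine (ae_restrict_iff' measurableSet_uIoc).2 (Filter.Eventually.of_forall fun s hs => ?_)
        rw [Set.uIoc_of_le hξx] at hs
        simpa [Real.norm_eq_abs] using hbd s hs
      have hval : (∫ s in ξ..x, C * (x - s) ^ N) = C * (x - ξ) ^ (N + 1) / (N + 1) := by
        rw [intervalIntegral.integral_const_mul]
        have := intervalIntegral.integral_comp_sub_left (a := ξ) (b := x) (fun t => t ^ N) x
        rw [this, sub_self, integral_pow]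
        ring
      rw [heq x ξ hξ0 hξx hx1 i j, ← Real.norm_eq_abs]
      refine le_trans hnorm ?_
      have hxξnn : (0:ℝ) ≤ x - ξ := sub_nonneg.2 hξx
      rw [hval, abs_of_nonneg (div_nonneg (mul_nonneg hCnn (pow_nonneg hxξnn _)) (by positivity))]
      rw [hC]
      have hfact : ((N + 1).factorial : ℝ) = ((N : ℝ) + 1) * N.factorial := by
        rw [Nat.factorial_succ]; push_cast; ring
      rw [hfact]
      have hNf : (0 : ℝ) < N.factorial := by positivity
      have hN1 : (0 : ℝ) < (N : ℝ) + 1 := by positivity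
      field_simp
      ring_nf
      exact le_refl _
  intro x ξ hξ0 hξx hx1 i j
  have hbds : ∀ N : ℕ, |d x ξ i j| ≤ D * (((m : ℝ) * B) ^ N / N.factorial) := by
    intro N
    refine le_trans (claim N x ξ hξ0 hξx hx1 i j) ?_
    have h1 : (x - ξ) ^ N ≤ 1 := pow_le_one₀ (sub_nonneg.2 hξx) (by linarith)
    have h3 : (0:ℝ) < (N.factorial : ℝ) := by positivity
    rw [div_le_iff₀ h3]
    calc D * ((m : ℝ) * B) ^ N * (x - ξ) ^ N ≤ D * ((m : ℝ) * B) ^ N * 1 :=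
          mul_le_mul_of_nonneg_left h1 (by positivity)
      _ = D * (((m : ℝ) * B) ^ N / N.factorial) * N.factorial := by field_simp
  have htend : Filter.Tendsto (fun N : ℕ => D * (((m : ℝ) * B) ^ N / N.factorial))
      Filter.atTop (nhds 0) := by
    have := (Real.summable_pow_div_factorial ((m : ℝ) * B)).tendsto_atTop_zero
    simpa using this.const_mul D
  have : |d x ξ i j| ≤ 0 := ge_of_tendsto htend (Filter.Eventually.of_forall hbds)
  exact abs_nonpos_iff.1 this

/- STATEMENT 11: For bounded measurable kernels K, L there is a unique bounded
measurable C⁻ solving the Volterra equation of the second kind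
C⁻(x,ξ) = Σ⁺⁻L(x,ξ) + ∫_ξ^x C⁻(x,s)L(s,ξ)ds on T, and then
C⁺(x,ξ) = Σ⁺⁻K(x,ξ) + ∫_ξ^x C⁻(x,s)K(s,ξ)ds is bounded as well. -/
theorem volterra_coupling_coefficients
    (n m : ℕ)
    (Spm : Fin n → Fin m → ℝ)
    (K : ℝ → ℝ → Fin m → Fin n → ℝ) (L : ℝ → ℝ → Fin m → Fin m → ℝ)
    (hKmeas : ∀ i j, Measurable (fun p : ℝ × ℝ => K p.1 p.2 i j))
    (hLmeas : ∀ i j, Measurable (fun p : ℝ × ℝ => L p.1 p.2 i j))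
    (hKLbdd : ∃ B : ℝ, ∀ x ξ : ℝ, 0 ≤ ξ → ξ ≤ x → x ≤ 1 →
        (∀ i j, |K x ξ i j| ≤ B) ∧ (∀ i j, |L x ξ i j| ≤ B)) :
    ∃ Cm : ℝ → ℝ → Fin n → Fin m → ℝ,
      ((∀ i j, Measurable (fun p : ℝ × ℝ => Cm p.1 p.2 i j)) ∧
       (∃ B : ℝ, ∀ x ξ : ℝ, 0 ≤ ξ → ξ ≤ x → x ≤ 1 → ∀ i j, |Cm x ξ i j| ≤ B) ∧
       (∀ x ξ : ℝ, 0 ≤ ξ → ξ ≤ x → x ≤ 1 → ∀ (i : Fin n) (j : Fin m),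
          Cm x ξ i j = (∑ k, Spm i k * L x ξ k j) +
            ∫ s in ξ..x, ∑ k, Cm x s i k * L s ξ k j)) ∧
      (∀ Cm' : ℝ → ℝ → Fin n → Fin m → ℝ,
        (∀ i j, Measurable (fun p : ℝ × ℝ => Cm' p.1 p.2 i j)) →
        (∃ B : ℝ, ∀ x ξ : ℝ, 0 ≤ ξ → ξ ≤ x → x ≤ 1 → ∀ i j, |Cm' x ξ i j| ≤ B) →
        (∀ x ξ : ℝ, 0 ≤ ξ → ξ ≤ x → x ≤ 1 → ∀ (i : Fin n) (j : Fin m),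
          Cm' x ξ i j = (∑ k, Spm i k * L x ξ k j) +
            ∫ s in ξ..x, ∑ k, Cm' x s i k * L s ξ k j) →
        ∀ x ξ : ℝ, 0 ≤ ξ → ξ ≤ x → x ≤ 1 → ∀ i j, Cm' x ξ i j = Cm x ξ i j) ∧
      (∀ Cp : ℝ → ℝ → Fin n → Fin n → ℝ,
        (∀ x ξ : ℝ, 0 ≤ ξ → ξ ≤ x → x ≤ 1 → ∀ (i : Fin n) (j : Fin n),
          Cp x ξ i j = (∑ k, Spm i k * K x ξ k j) +
            ∫ s in ξ..x, ∑ k, Cm x s i k * K s ξ k j) →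
        ∃ B : ℝ, ∀ x ξ : ℝ, 0 ≤ ξ → ξ ≤ x → x ≤ 1 → ∀ i j, |Cp x ξ i j| ≤ B) := by
    classical
  obtain ⟨B0, hB0⟩ := hKLbdd
  set B : ℝ := max B0 0 with hBdef
  have hB : 0 ≤ B := le_max_right _ _
  have hL' : ∀ p ∈ Tri, ∀ i j, |L (p : ℝ × ℝ).1 p.2 i j| ≤ B := by
    rintro ⟨x, ξ⟩ ⟨h1, h2, h3⟩ i j
    exact le_trans ((hB0 x ξ h1 h2 h3).2 i j) (le_max_left _ _)
  have hK' : ∀ p ∈ Tri, ∀ i j, |K (p : ℝ × ℝ).1 p.2 i j| ≤ B := by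
    rintro ⟨x, ξ⟩ ⟨h1, h2, h3⟩ i j
    exact le_trans ((hB0 x ξ h1 h2 h3).1 i j) (le_max_left _ _)
  set S : ℝ := ∑ i, ∑ k, |Spm i k| with hSdef
  have hS : 0 ≤ S := Finset.sum_nonneg fun i _ => Finset.sum_nonneg fun k _ => abs_nonneg _
  have hSpm : ∀ i, ∑ k, |Spm i k| ≤ S := fun i =>
    Finset.single_le_sum (f := fun i => ∑ k, |Spm i k|)
      (fun i _ => Finset.sum_nonneg fun k _ => abs_nonneg _) (Finset.mem_univ i)
  set B2 : ℝ := ∑' N : ℕ, S * B * (((m : ℝ) * B) ^ N / N.factorial) with hB2def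
  have hB2 : 0 ≤ B2 := tsum_nonneg fun N => by positivity
  refine ⟨fun x ξ i j => CmFun n m Spm L (x, ξ) i j, ⟨?_, ⟨B2, ?_⟩, ?_⟩, ?_, ?_⟩
  · -- measurability
    intro i j
    have := CmFun_meas n m Spm L hLmeas hB hS hL' hSpm i j
    exact this.comp (measurable_fst.prodMk measurable_snd)
  · -- boundedness
    intro x ξ h1 h2 h3 i j
    exact CmFun_bound n m Spm L hB hS hL' hSpm (x, ξ) ⟨h1, h2, h3⟩ i j
  · -- equation
    intro x ξ h1 h2 h3 i j
    exact CmFun_eq n m Spm L hLmeas hB hS hL' hSpm x ξ h1 h2 h3 i j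
  · -- uniqueness
    intro Cm' hmeas' ⟨B', hB'⟩ heq' x ξ h1 h2 h3 i j
    set Cm : ℝ → ℝ → Fin n → Fin m → ℝ := fun x ξ i j => CmFun n m Spm L (x, ξ) i j with hCmdef
    have hCmbd : ∀ x ξ : ℝ, 0 ≤ ξ → ξ ≤ x → x ≤ 1 → ∀ i j, |Cm x ξ i j| ≤ B2 :=
      fun x ξ h1 h2 h3 i j => CmFun_bound n m Spm L hB hS hL' hSpm (x, ξ) ⟨h1, h2, h3⟩ i j
    have hCmeq : ∀ x ξ : ℝ, 0 ≤ ξ → ξ ≤ x → x ≤ 1 → ∀ (i : Fin n) (j : Fin m),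
        Cm x ξ i j = (∑ k, Spm i k * L x ξ k j) +
          ∫ s in ξ..x, ∑ k, Cm x s i k * L s ξ k j :=
      fun x ξ h1 h2 h3 i j => CmFun_eq n m Spm L hLmeas hB hS hL' hSpm x ξ h1 h2 h3 i j
    -- integrability of both integrands
    have hint : ∀ (C : ℝ → ℝ → Fin n → Fin m → ℝ) (BC : ℝ),
        (∀ i j, Measurable (fun p : ℝ × ℝ => C p.1 p.2 i j)) →
        (∀ x ξ : ℝ, 0 ≤ ξ → ξ ≤ x → x ≤ 1 → ∀ i j, |C x ξ i j| ≤ BC) →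
        ∀ x ξ : ℝ, 0 ≤ ξ → ξ ≤ x → x ≤ 1 → ∀ (i : Fin n) (j : Fin m),
          IntervalIntegrable (fun s => ∑ k, C x s i k * L s ξ k j) volume ξ x := by
      intro C BC hCm hCb x ξ h1 h2 h3 i j
      rw [intervalIntegrable_iff, Set.uIoc_of_le h2]
      have hconst : IntegrableOn (fun _ : ℝ => (m : ℝ) * max BC 0 * B) (Set.Ioc ξ x) volume :=
        integrableOn_const measure_Ioc_lt_top.ne
      refine hconst.mono' ?_ ?_
      · refine (Finset.measurable_sum _ fun k _ => Measurable.mul ?_ ?_).aestronglyMeasurable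
        · exact (hCm i k).comp (measurable_const.prodMk measurable_id)
        · exact (hLmeas k j).comp (measurable_id.prodMk measurable_const)
      · refine (ae_restrict_iff' measurableSet_Ioc).2 (Filter.Eventually.of_forall fun s hs => ?_)
        have hxs0 : 0 ≤ s := le_trans h1 hs.1.le
        have hsx1 : s ≤ 1 := le_trans hs.2 h3
        have hsξ : ((s, ξ) : ℝ × ℝ) ∈ Tri := ⟨h1, hs.1.le, hsx1⟩
        rw [Real.norm_eq_abs]
        calc |∑ k, C x s i k * L s ξ k j| ≤ ∑ k, |C x s i k * L s ξ k j| :=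
              Finset.abs_sum_le_sum_abs _ _
          _ ≤ ∑ _k : Fin m, max BC 0 * B := by
              refine Finset.sum_le_sum fun k _ => ?_
              rw [abs_mul]
              exact mul_le_mul (le_trans (hCb x s hxs0 hs.2 h3 i k) (le_max_left _ _))
                (hL' _ hsξ k j) (abs_nonneg _) (le_max_right _ _)
          _ = (m : ℝ) * max BC 0 * B := by
              rw [Finset.sum_const, Finset.card_univ, Fintype.card_fin, nsmul_eq_mul]; ring
    have heqd : ∀ x ξ : ℝ, 0 ≤ ξ → ξ ≤ x → x ≤ 1 → ∀ i j,
        Cm' x ξ i j - Cm x ξ i j =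
          ∫ s in ξ..x, ∑ k, (Cm' x s i k - Cm x s i k) * L s ξ k j := by
      intro x ξ h1 h2 h3 i j
      have i1 := hint Cm' B' hmeas'
        (fun x ξ h1 h2 h3 i j => hB' x ξ h1 h2 h3 i j) x ξ h1 h2 h3 i j
      have i2 := hint Cm B2 (fun i j =>
          (CmFun_meas n m Spm L hLmeas hB hS hL' hSpm i j).comp
            (measurable_fst.prodMk measurable_snd))
        hCmbd x ξ h1 h2 h3 i j
      rw [heq' x ξ h1 h2 h3 i j, hCmeq x ξ h1 h2 h3 i j]
      have : ((∑ k, Spm i k * L x ξ k j) + ∫ s in ξ..x, ∑ k, Cm' x s i k * L s ξ k j) -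
          ((∑ k, Spm i k * L x ξ k j) + ∫ s in ξ..x, ∑ k, Cm x s i k * L s ξ k j) =
          (∫ s in ξ..x, ∑ k, Cm' x s i k * L s ξ k j) -
          ∫ s in ξ..x, ∑ k, Cm x s i k * L s ξ k j := by ring
      rw [this, ← intervalIntegral.integral_sub i1 i2]
      refine intervalIntegral.integral_congr fun s _ => ?_
      rw [← Finset.sum_sub_distrib]
      exact Finset.sum_congr rfl fun k _ => by ring
    have hdbd : ∀ x ξ : ℝ, 0 ≤ ξ → ξ ≤ x → x ≤ 1 → ∀ i j,
        |Cm' x ξ i j - Cm x ξ i j| ≤ max (B' + B2) 0 := fun x ξ h1 h2 h3 i j =>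
      le_trans ((abs_sub _ _).trans
        (add_le_add (hB' x ξ h1 h2 h3 i j) (hCmbd x ξ h1 h2 h3 i j))) (le_max_left _ _)
    have hDnn : (0:ℝ) ≤ max (B' + B2) 0 := le_max_right _ _
    have := volterra_unique_aux n m L hB hDnn hL'
      (fun x ξ i j => Cm' x ξ i j - Cm x ξ i j) hdbd heqd x ξ h1 h2 h3 i j
    exact sub_eq_zero.1 this
  · -- C⁺ bound
    intro Cp hCp
    refine ⟨S * B + (m : ℝ) * B2 * B, fun x ξ h1 h2 h3 i j => ?_⟩
    rw [hCp x ξ h1 h2 h3 i j]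
    have hterm1 : |∑ k, Spm i k * K x ξ k j| ≤ S * B := by
      calc |∑ k, Spm i k * K x ξ k j| ≤ ∑ k, |Spm i k * K x ξ k j| :=
            Finset.abs_sum_le_sum_abs _ _
        _ ≤ ∑ k, |Spm i k| * B := by
            refine Finset.sum_le_sum fun k _ => ?_
            rw [abs_mul]
            exact mul_le_mul_of_nonneg_left (hK' (x, ξ) ⟨h1, h2, h3⟩ k j) (abs_nonneg _)
        _ = (∑ k, |Spm i k|) * B := by rw [Finset.sum_mul]
        _ ≤ S * B := mul_le_mul_of_nonneg_right (hSpm i) hB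
    have hterm2 : ‖∫ s in ξ..x, ∑ k, CmFun n m Spm L (x, s) i k * K s ξ k j‖ ≤
        ((m : ℝ) * B2 * B) * |x - ξ| := by
      refine intervalIntegral.norm_integral_le_of_norm_le_const fun s hs => ?_
      rw [Set.uIoc_of_le h2] at hs
      have hxs : ((x, s) : ℝ × ℝ) ∈ Tri := ⟨le_trans h1 hs.1.le, hs.2, h3⟩
      have hsξ : ((s, ξ) : ℝ × ℝ) ∈ Tri := ⟨h1, hs.1.le, le_trans hs.2 h3⟩
      rw [Real.norm_eq_abs]
      calc |∑ k, CmFun n m Spm L (x, s) i k * K s ξ k j|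
          ≤ ∑ k, |CmFun n m Spm L (x, s) i k * K s ξ k j| := Finset.abs_sum_le_sum_abs _ _
        _ ≤ ∑ _k : Fin m, B2 * B := by
            refine Finset.sum_le_sum fun k _ => ?_
            rw [abs_mul]
            exact mul_le_mul (CmFun_bound n m Spm L hB hS hL' hSpm (x, s) hxs i k)
              (hK' _ hsξ k j) (abs_nonneg _) hB2
        _ = (m : ℝ) * B2 * B := by
            rw [Finset.sum_const, Finset.card_univ, Fintype.card_fin, nsmul_eq_mul]; ring
    have habs1 : |x - ξ| ≤ 1 := by rw [abs_of_nonneg (sub_nonneg.2 h2)]; linarith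
    calc |(∑ k, Spm i k * K x ξ k j) + ∫ s in ξ..x, ∑ k, CmFun n m Spm L (x, s) i k * K s ξ k j|
        ≤ |∑ k, Spm i k * K x ξ k j| +
          |∫ s in ξ..x, ∑ k, CmFun n m Spm L (x, s) i k * K s ξ k j| := abs_add_le _ _
      _ ≤ S * B + ((m : ℝ) * B2 * B) * |x - ξ| := add_le_add hterm1
          (by rw [← Real.norm_eq_abs (∫ s in ξ..x, _)]; exact hterm2)
      _ ≤ S * B + (m : ℝ) * B2 * B := by
          refine add_le_add le_rfl ?_
          calc ((m : ℝ) * B2 * B) * |x - ξ| ≤ ((m : ℝ) * B2 * B) * 1 :=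
                mul_le_mul_of_nonneg_left habs1 (by positivity)
            _ = (m : ℝ) * B2 * B := mul_one _
end
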